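/- Let A be a Noetherian ring and M a finitely presented A-module. Then the fibre dimension function 𝔭 ↦ dim_{k(𝔭)} (M ⊗_A k(𝔭)) is upper semicontinuous on Spec A: every prime 𝔭 has an open neighbourhood U such that dim_{k(𝔮)} M ⊗_A k(𝔮) ≤ dim_{k(𝔭)} M ⊗_A k(𝔭) for all 𝔮 ∈ U. -/

import Mathlib

open TensorProduct

/-- The residue field `k(𝔭) = A_𝔭/𝔭A_𝔭` of `A` at a prime `𝔭`. -/
noncomputable abbrev resF (A : Type) [CommRing A] (p : PrimeSpectrum A) : Type :=
  IsLocalRing.ResidueField (Localization.AtPrime p.asIdeal)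

/-- A spanning criterion: if a finite family spans the fibre, the finrank is at most the
cardinality of the family. -/
lemma finrank_le_card_of_span_eq_top {K V : Type*} [Field K] [AddCommGroup V] [Module K V]
    {ι : Type*} [Fintype ι] (w : ι → V) (h : Submodule.span K (Set.range w) = ⊤) :
    Module.finrank K V ≤ Fintype.card ι := by
  classical
  have h1 : Module.finrank K V = Module.finrank K (Submodule.span K (Set.range w)) := by
    rw [h, finrank_top]
  rw [h1]
  refine le_trans (finrank_span_le_card (R := K) (Set.range w)) ?_
  rw [Set.toFinset_range]
  exact Finset.card_image_le.trans (by simp)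

set_option maxHeartbeats 1000000 in
/-- Let `A` be a Noetherian ring and `M` a finitely presented `A`-module.
Then the fibre dimension function `𝔭 ↦ dim_{k(𝔭)} (M ⊗_A k(𝔭))` is upper semicontinuous
on `Spec A`. -/
theorem fibre_dimension_upper_semicontinuous
    (A M : Type) [CommRing A] [IsNoetherianRing A]
    [AddCommGroup M] [Module A M] [Module.FinitePresentation A M]
    (p : PrimeSpectrum A) :
    ∃ U : Set (PrimeSpectrum A), IsOpen U ∧ p ∈ U ∧ ∀ q ∈ U,
      Module.finrank (resF A q) ((resF A q) ⊗[A] M) ≤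
        Module.finrank (resF A p) ((resF A p) ⊗[A] M) := by
  classical
  set k := resF A p
  -- the set of "pure tensors with 1 on the left" spans the fibre at p
  have htm : ∀ (q : PrimeSpectrum A),
      Submodule.span (resF A q) {t : resF A q ⊗[A] M | ∃ c m, c ⊗ₜ m = t} = ⊤ := by
    intro q
    rw [eq_top_iff]
    intro x _
    have hx : x ∈ (⊤ : Submodule A (resF A q ⊗[A] M)) := trivial
    rw [← TensorProduct.span_tmul_eq_top A (resF A q) M] at hx
    exact Submodule.span_le_restrictScalars A (resF A q) _ hx
  have hspan_p : Submodule.span k (Set.range (TensorProduct.mk A k M 1)) = ⊤ := by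
    rw [eq_top_iff, ← htm p]
    rw [Submodule.span_le]
    rintro _ ⟨c, m, rfl⟩
    have : c ⊗ₜ[A] m = c • ((1 : k) ⊗ₜ[A] m) := by
      rw [TensorProduct.smul_tmul', smul_eq_mul, mul_one]
    rw [this]
    exact Submodule.smul_mem _ _ (Submodule.subset_span ⟨m, rfl⟩)
  -- extract a basis of pure tensors
  obtain ⟨s, hst, hsspan, hsli⟩ :=
    exists_linearIndependent k (Set.range (TensorProduct.mk A k M 1))
  rw [hspan_p] at hsspan
  have hsfin : s.Finite := hsli.setFinite
  haveI : Fintype s := hsfin.fintype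
  let b : Module.Basis s k (k ⊗[A] M) := Module.Basis.mk hsli (by rw [Subtype.range_coe, hsspan])
  have hcard : Module.finrank k (k ⊗[A] M) = Fintype.card s :=
    Module.finrank_eq_card_basis b
  -- choose preimages in M
  have hv : ∀ x : s, ∃ m : M, (1 : k) ⊗ₜ[A] m = (x : k ⊗[A] M) := fun x ↦ hst x.2
  choose v hvv using hv
  -- Nakayama at p: the vᵢ generate M after localizing at p
  set Aₚ := Localization.AtPrime p.asIdeal
  haveI : IsLocalizedModule p.asIdeal.primeCompl (TensorProduct.mk A Aₚ M 1) :=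
    (isLocalizedModule_iff_isBaseChange p.asIdeal.primeCompl Aₚ _).mpr
      (TensorProduct.isBaseChange A M Aₚ)
  let e : (k ⊗[Aₚ] (Aₚ ⊗[A] M)) ≃ₗ[k] (k ⊗[A] M) :=
    AlgebraTensorModule.cancelBaseChange A Aₚ k k M
  let b' : Module.Basis s k (k ⊗[Aₚ] (Aₚ ⊗[A] M)) := b.map e.symm
  have hb' : ∀ x : s, (1 : k) ⊗ₜ[Aₚ] ((1 : Aₚ) ⊗ₜ[A] v x) = b' x := by
    intro x
    apply e.injective
    simp only [b', Module.Basis.map_apply, LinearEquiv.apply_symm_apply]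
    rw [show e ((1 : k) ⊗ₜ[Aₚ] ((1 : Aₚ) ⊗ₜ[A] v x)) = (1 : k) ⊗ₜ[A] v x from by
      simp [e]]
    rw [hvv x, Module.Basis.mk_apply]
  have hNak : Submodule.span Aₚ (Set.range fun x : s ↦ (1 : Aₚ) ⊗ₜ[A] v x) = ⊤ :=
    IsLocalRing.span_eq_top_of_tmul_eq_basis (R := Aₚ) (M := Aₚ ⊗[A] M)
      (fun x : s ↦ (1 : Aₚ) ⊗ₜ[A] v x) b' hb'
  -- the submodule generated by the vᵢ and the quotient
  set N : Submodule A M := Submodule.span A (Set.range v)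
  have hNloc : N.localized' Aₚ p.asIdeal.primeCompl (TensorProduct.mk A Aₚ M 1) = ⊤ := by
    rw [Submodule.localized'_span, ← Set.range_comp]
    exact hNak
  -- the localization of M/N at p vanishes
  have hploc : Subsingleton (LocalizedModule p.asIdeal.primeCompl (M ⧸ N)) := by
    have hsub : Subsingleton ((Aₚ ⊗[A] M) ⧸
        (N.localized' Aₚ p.asIdeal.primeCompl (TensorProduct.mk A Aₚ M 1))) := by
      rw [hNloc]
      exact Submodule.Quotient.subsingleton_iff.mpr rfl
    exact (IsLocalizedModule.iso p.asIdeal.primeCompl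
      (N.toLocalizedQuotient' Aₚ p.asIdeal.primeCompl (TensorProduct.mk A Aₚ M 1))).toEquiv.subsingleton
  -- the open set
  refine ⟨(Module.support A (M ⧸ N))ᶜ, ?_, ?_, ?_⟩
  · rw [Module.support_eq_zeroLocus]
    exact (PrimeSpectrum.isClosed_zeroLocus _).isOpen_compl
  · exact Module.notMem_support_iff.mpr hploc
  · intro q hq
    have hq' : ∀ m : M ⧸ N, ∃ r ∉ q.asIdeal, r • m = 0 :=
      Module.notMem_support_iff'.mp hq
    -- the images of the vᵢ span the fibre at q
    have hspan_q : Submodule.span (resF A q)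
        (Set.range fun x : s ↦ (1 : resF A q) ⊗ₜ[A] v x) = ⊤ := by
      rw [eq_top_iff, ← htm q, Submodule.span_le]
      rintro _ ⟨c, m, rfl⟩
      obtain ⟨r, hr, hrm⟩ := hq' (Submodule.Quotient.mk m)
      rw [← Submodule.Quotient.mk_smul, Submodule.Quotient.mk_eq_zero] at hrm
      -- r maps to a unit of the residue field at q
      have hu : IsUnit (algebraMap A (resF A q) r) := by
        rw [IsScalarTower.algebraMap_apply A (Localization.AtPrime q.asIdeal) (resF A q)]
        exact (IsLocalization.map_units (Localization.AtPrime q.asIdeal)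
          (⟨r, hr⟩ : q.asIdeal.primeCompl)).map (algebraMap _ _)
      obtain ⟨u, hu⟩ := hu
      -- 1 ⊗ (r • m) lies in the span
      have hmem : (1 : resF A q) ⊗ₜ[A] (r • m) ∈ Submodule.span (resF A q)
          (Set.range fun x : s ↦ (1 : resF A q) ⊗ₜ[A] v x) := by
        have h2 : (1 : resF A q) ⊗ₜ[A] (r • m) ∈ Submodule.span A
            (⇑(TensorProduct.mk A (resF A q) M 1) '' Set.range v) := by
          rw [← Submodule.map_span]
          exact ⟨r • m, hrm, rfl⟩
        have h3 := Submodule.span_le_restrictScalars A (resF A q) _ h2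
        rwa [← Set.range_comp] at h3
      have key : c ⊗ₜ[A] m = (c * ↑u⁻¹) • ((1 : resF A q) ⊗ₜ[A] (r • m)) := by
        rw [TensorProduct.tmul_smul, TensorProduct.smul_tmul', TensorProduct.smul_tmul',
          smul_eq_mul, Algebra.smul_def, mul_one, ← hu, mul_assoc, Units.inv_mul, mul_one]
      rw [key]
      exact Submodule.smul_mem _ _ hmem
    calc Module.finrank (resF A q) ((resF A q) ⊗[A] M) ≤ Fintype.card s :=
          finrank_le_card_of_span_eq_top _ hspan_q
      _ = Module.finrank k (k ⊗[A] M) := hcard.symm
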